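/- arXiv:1603.01179 — 2 statements merged into one kernel-verified Lean document; each statement's English description precedes it below -/
import Mathlib

section
/- Let G₁ be the graph on vertex set {a,b,c,d,e,f,g,h} with edge set {ab, bc, cd, ce, ef, fd, cg, gh, hd}, and let H = G₁ − d be the induced subgraph on {a,b,c,e,f,g,h}. Then H is connected and is not 1-laminar: no diametral path of H is 1-dominating. Consequently G₁ is 1-laminar but is not a diametral path graph, so the class of diametral path graphs is strictly contained in the class of 1-laminar graphs. -/
open SimpleGraph

/-- A walk `p` is a diametral path: a shortest path between two vertices at distance `diam G`. -/
def IsDiametralPath {V : Type*} (G : SimpleGraph V) {u v : V} (p : G.Walk u v) : Prop :=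
  p.length = G.dist u v ∧ G.dist u v = G.diam

/-- A walk `p` is `k`-dominating: every vertex of `G` is at distance at most `k`
from some vertex of `p`. -/
def IsKDominating {V : Type*} (G : SimpleGraph V) (k : ℕ) {u v : V} (p : G.Walk u v) : Prop :=
  ∀ x : V, ∃ y ∈ p.support, G.dist x y ≤ k

/-- `G` is `k`-laminar: it has a `k`-dominating diametral path. -/
def KLaminar {V : Type*} (G : SimpleGraph V) (k : ℕ) : Prop :=
  ∃ (u v : V) (p : G.Walk u v), IsDiametralPath G p ∧ IsKDominating G k p

/-- `G` is a diametral path graph: every connected induced subgraph of `G` has a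
1-dominating diametral path, i.e. is 1-laminar. -/
def DiametralPathGraph {V : Type*} (G : SimpleGraph V) : Prop :=
  ∀ s : Set V, (G.induce s).Connected → KLaminar (G.induce s) 1

/-- The graph `G₁` on vertices `a, b, c, d, e, f, g, h` (encoded as `0, …, 7`) with edges
`ab, bc, cd, ce, ef, fd, cg, gh, hd`. -/
def G1 : SimpleGraph (Fin 8) :=
  SimpleGraph.fromRel (fun u v =>
    (u, v) ∈ [((0:Fin 8),(1:Fin 8)),(1,2),(2,3),(2,4),(4,5),(5,3),(2,6),(6,7),(7,3)])

/-! ### Auxiliary general lemmas -/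

section Aux

variable {V : Type*} {W : Type*} {G : SimpleGraph V} {G' : SimpleGraph W}

lemma aux_walk_potential (f : V → ℕ) (hf : ∀ x y, G.Adj x y → f y ≤ f x + 1) :
    ∀ {u v : V} (p : G.Walk u v), f v ≤ f u + p.length := by
  intro u v p
  induction p with
  | nil => simp
  | @cons a b c h q ih =>
      have := hf a b h
      simp only [Walk.length_cons]
      omega

lemma aux_dist_lower (f : V → ℕ) (hf : ∀ x y, G.Adj x y → f y ≤ f x + 1)
    {u v : V} (hu : f u = 0) (hr : G.Reachable u v) : f v ≤ G.dist u v := by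
  obtain ⟨p, hp⟩ := hr.exists_walk_length_eq_dist
  have := aux_walk_potential f hf p
  omega

lemma aux_dist_support [DecidableEq V] {u v y : V} (p : G.Walk u v) (hy : y ∈ p.support) :
    G.dist u y + G.dist y v ≤ p.length := by
  have h := p.take_spec hy
  have hl : (p.takeUntil y hy).length + (p.dropUntil y hy).length = p.length := by
    rw [← Walk.length_append, h]
  have h1 := G.dist_le (p.takeUntil y hy)
  have h2 := G.dist_le (p.dropUntil y hy)
  omega

lemma aux_edist_map (φ : G ≃g G') (u v : V) :
    G'.edist (φ u) (φ v) ≤ G.edist u v := by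
  rw [edist_eq_sInf]
  refine le_sInf ?_
  rintro _ ⟨p, rfl⟩
  exact le_trans (sInf_le (Set.mem_range_self (p.map φ.toHom))) (by simp [Walk.length_map])

lemma aux_edist_iso (φ : G ≃g G') (u v : V) :
    G'.edist (φ u) (φ v) = G.edist u v := by
  refine le_antisymm (aux_edist_map φ u v) ?_
  simpa using aux_edist_map φ.symm (φ u) (φ v)

lemma aux_dist_iso (φ : G ≃g G') (u v : V) :
    G'.dist (φ u) (φ v) = G.dist u v :=
  congrArg ENat.toNat (aux_edist_iso φ u v)

lemma aux_ediam_iso (φ : G ≃g G') : G'.ediam = G.ediam := by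
  refine le_antisymm (ediam_le_of_edist_le fun u v => ?_)
    (ediam_le_of_edist_le fun u v => ?_)
  · calc G'.edist u v = G'.edist (φ (φ.symm u)) (φ (φ.symm v)) := by simp
      _ = G.edist (φ.symm u) (φ.symm v) := aux_edist_iso φ _ _
      _ ≤ G.ediam := edist_le_ediam
  · calc G.edist u v = G'.edist (φ u) (φ v) := (aux_edist_iso φ u v).symm
      _ ≤ G'.ediam := edist_le_ediam

lemma aux_diam_iso (φ : G ≃g G') : G'.diam = G.diam :=
  congrArg ENat.toNat (aux_ediam_iso φ)

lemma aux_klaminar_iso (φ : G ≃g G') {k : ℕ} (h : KLaminar G k) : KLaminar G' k := by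
  obtain ⟨u, v, p, ⟨h1, h2⟩, h3⟩ := h
  refine ⟨φ u, φ v, p.map φ.toHom, ⟨?_, ?_⟩, ?_⟩
  · rw [Walk.length_map, aux_dist_iso φ]; exact h1
  · rw [aux_dist_iso φ, aux_diam_iso φ]; exact h2
  · intro x
    obtain ⟨y, hy, hle⟩ := h3 (φ.symm x)
    refine ⟨φ y, ?_, ?_⟩
    · rw [Walk.support_map]; exact List.mem_map_of_mem hy
    · calc G'.dist x (φ y) = G'.dist (φ (φ.symm x)) (φ y) := by simp
        _ = G.dist (φ.symm x) y := aux_dist_iso φ _ _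
        _ ≤ k := hle

end Aux

/-! ### Decidability and basic vertices -/

instance G1.adjDecidable : DecidableRel G1.Adj := fun u v => by
  unfold G1
  exact decidable_of_iff _ (SimpleGraph.fromRel_adj _ u v).symm

abbrev HS : Set (Fin 8) := {v : Fin 8 | v ≠ 3}

instance : DecidableRel (G1.induce HS).Adj := fun a b =>
  inferInstanceAs (Decidable (G1.Adj a.1 b.1))

abbrev hv (i : Fin 8) (h : i ≠ 3 := by decide) : ↥HS := ⟨i, h⟩

lemma hadj {a b : ↥HS} (h : G1.Adj a.1 b.1) : (G1.induce HS).Adj a b := h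

/-! ### Walks to the center in `H` -/

def w12 : (G1.induce HS).Walk (hv 1) (hv 2) := .cons (hadj (by decide)) .nil
def w02 : (G1.induce HS).Walk (hv 0) (hv 2) := .cons (hadj (by decide)) w12
def w42 : (G1.induce HS).Walk (hv 4) (hv 2) := .cons (hadj (by decide)) .nil
def w52 : (G1.induce HS).Walk (hv 5) (hv 2) := .cons (hadj (by decide)) w42
def w62 : (G1.induce HS).Walk (hv 6) (hv 2) := .cons (hadj (by decide)) .nil
def w72 : (G1.induce HS).Walk (hv 7) (hv 2) := .cons (hadj (by decide)) w62

lemma H_edist_center : ∀ u : ↥HS, (G1.induce HS).edist u (hv 2) ≤ 2 := by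
  rintro ⟨i, hi⟩
  fin_cases i
  · exact le_trans ((G1.induce HS).edist_le w02) (by norm_num [w02, w12])
  · exact le_trans ((G1.induce HS).edist_le w12) (by norm_num [w12])
  · simp [SimpleGraph.edist_self]
  · exact absurd rfl hi
  · exact le_trans ((G1.induce HS).edist_le w42) (by norm_num [w42])
  · exact le_trans ((G1.induce HS).edist_le w52) (by norm_num [w52, w42])
  · exact le_trans ((G1.induce HS).edist_le w62) (by norm_num [w62])
  · exact le_trans ((G1.induce HS).edist_le w72) (by norm_num [w72, w62])

lemma H_connected : (G1.induce HS).Connected := by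
  have hr : ∀ u : ↥HS, (G1.induce HS).Reachable u (hv 2) := by
    intro u
    have h := H_edist_center u
    refine (G1.induce HS).reachable_of_edist_ne_top (fun ht => ?_)
    rw [ht] at h
    exact (by simp : ¬ (⊤ : ℕ∞) ≤ 2) h
  haveI : Nonempty ↥HS := ⟨hv 2⟩
  exact ⟨fun u v => (hr u).trans (hr v).symm⟩

/-! ### Distance tables in `H` (the value at index `3` is irrelevant) -/

def dt0 : Fin 8 → ℕ := ![0,1,2,9,3,4,3,4]
def dt5 : Fin 8 → ℕ := ![4,3,2,9,1,0,3,4]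
def dt7 : Fin 8 → ℕ := ![4,3,2,9,3,4,1,0]
def dt2 : Fin 8 → ℕ := ![2,1,0,9,1,2,1,2]

lemma H_dist_lower (f : Fin 8 → ℕ)
    (hf : ∀ x y : Fin 8, x ≠ 3 → y ≠ 3 → G1.Adj x y → f y ≤ f x + 1)
    {u v : ↥HS} (hu : f u.1 = 0) : f v.1 ≤ (G1.induce HS).dist u v := by
  refine aux_dist_lower (fun a : ↥HS => f a.1) ?_ hu (H_connected.preconnected u v)
  intro x y hxy
  exact hf x.1 y.1 x.2 y.2 hxy

lemma H_dist_upper_center : ∀ u : ↥HS, (G1.induce HS).dist u (hv 2) ≤ dt2 u.1 := by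
  rintro ⟨i, hi⟩
  fin_cases i
  · exact le_trans ((G1.induce HS).dist_le w02) (by norm_num [w02, w12, dt2])
  · exact le_trans ((G1.induce HS).dist_le w12) (by norm_num [w12, dt2])
  · simp [dt2]
  · exact absurd rfl hi
  · exact le_trans ((G1.induce HS).dist_le w42) (by norm_num [w42, dt2])
  · exact le_trans ((G1.induce HS).dist_le w52) (by norm_num [w52, w42, dt2])
  · exact le_trans ((G1.induce HS).dist_le w62) (by norm_num [w62, dt2])
  · exact le_trans ((G1.induce HS).dist_le w72) (by norm_num [w72, w62, dt2])

lemma dt0_lip : ∀ x y : Fin 8, x ≠ 3 → y ≠ 3 → G1.Adj x y → dt0 y ≤ dt0 x + 1 := by decide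
lemma dt5_lip : ∀ x y : Fin 8, x ≠ 3 → y ≠ 3 → G1.Adj x y → dt5 y ≤ dt5 x + 1 := by decide
lemma dt7_lip : ∀ x y : Fin 8, x ≠ 3 → y ≠ 3 → G1.Adj x y → dt7 y ≤ dt7 x + 1 := by decide

lemma H_dist05 : 4 ≤ (G1.induce HS).dist (hv 0) (hv 5) :=
  H_dist_lower dt0 dt0_lip (u := hv 0) (v := hv 5) (by decide)

lemma H_ediam : (G1.induce HS).ediam = 4 := by
  refine le_antisymm (ediam_le_of_edist_le fun u v => ?_) ?_
  · calc (G1.induce HS).edist u v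
        ≤ (G1.induce HS).edist u (hv 2) + (G1.induce HS).edist (hv 2) v :=
          SimpleGraph.edist_triangle
      _ ≤ 2 + 2 := by
          refine add_le_add (H_edist_center u) ?_
          rw [SimpleGraph.edist_comm]; exact H_edist_center v
      _ = 4 := by norm_num
  · have h1 : (G1.induce HS).edist (hv 0) (hv 5) ≠ ⊤ :=
      edist_ne_top_iff_reachable.mpr (H_connected.preconnected _ _)
    have h2 : (4 : ℕ∞) ≤ (G1.induce HS).edist (hv 0) (hv 5) := by
      rw [← ENat.coe_toNat h1]
      exact_mod_cast H_dist05
    exact le_trans h2 edist_le_ediam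

lemma H_diam : (G1.induce HS).diam = 4 := by
  have : (G1.induce HS).diam = ((4 : ℕ∞)).toNat := congrArg ENat.toNat H_ediam
  simpa using this

lemma dt2_le : ∀ i : Fin 8, i ≠ 3 → dt2 i ≤ 2 := by decide

lemma H_not_klaminar : ¬ KLaminar (G1.induce HS) 1 := by
  rintro ⟨u, v, p, ⟨hlen, hdiam⟩, hdom⟩
  rw [H_diam] at hdiam
  have htri : (G1.induce HS).dist u v ≤
      (G1.induce HS).dist u (hv 2) + (G1.induce HS).dist (hv 2) v :=
    H_connected.dist_triangle
  have hu2 := H_dist_upper_center u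
  have hv2 : (G1.induce HS).dist (hv 2) v ≤ dt2 v.1 := by
    rw [SimpleGraph.dist_comm]; exact H_dist_upper_center v
  have hule := dt2_le u.1 u.2
  have hvle := dt2_le v.1 v.2
  have hueq : dt2 u.1 = 2 := by omega
  have hveq : dt2 v.1 = 2 := by omega
  have hclass0 : ∀ i : Fin 8, i ≠ 3 → dt2 i = 2 → i = 0 ∨ i = 5 ∨ i = 7 := by decide
  have hclass : ∀ w : ↥HS, dt2 w.1 = 2 → w = hv 0 ∨ w = hv 5 ∨ w = hv 7 := by
    intro w h
    rcases hclass0 w.1 w.2 h with h' | h' | h'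
    · exact Or.inl (Subtype.ext h')
    · exact Or.inr (Or.inl (Subtype.ext h'))
    · exact Or.inr (Or.inr (Subtype.ext h'))
  -- main contradiction machine
  have main : ∀ (fu fv fx : Fin 8 → ℕ) (x : ↥HS),
      (∀ y : ↥HS, fu y.1 ≤ (G1.induce HS).dist u y) →
      (∀ y : ↥HS, fv y.1 ≤ (G1.induce HS).dist y v) →
      (∀ y : ↥HS, fx y.1 ≤ (G1.induce HS).dist x y) →
      (∀ i : Fin 8, i ≠ 3 → fu i + fv i ≤ 4 → 2 ≤ fx i) → False := by
    intro fu fv fx x h1 h2 h3 htab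
    obtain ⟨y, hy, hxy⟩ := hdom x
    have hs := aux_dist_support p hy
    rw [hlen, hdiam] at hs
    have e1 := h1 y
    have e2 := h2 y
    have e3 := h3 y
    have := htab y.1 y.2 (by omega)
    omega
  have low : ∀ (f : Fin 8 → ℕ),
      (∀ x y : Fin 8, x ≠ 3 → y ≠ 3 → G1.Adj x y → f y ≤ f x + 1) →
      ∀ (w : ↥HS), f w.1 = 0 → ∀ y : ↥HS, f y.1 ≤ (G1.induce HS).dist w y :=
    fun f hf w h0 y => H_dist_lower f hf h0
  have lowc : ∀ (f : Fin 8 → ℕ),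
      (∀ x y : Fin 8, x ≠ 3 → y ≠ 3 → G1.Adj x y → f y ≤ f x + 1) →
      ∀ (w : ↥HS), f w.1 = 0 → ∀ y : ↥HS, f y.1 ≤ (G1.induce HS).dist y w := by
    intro f hf w h0 y
    rw [SimpleGraph.dist_comm]
    exact H_dist_lower f hf h0
  rcases hclass u hueq with rfl | rfl | rfl <;> rcases hclass v hveq with rfl | rfl | rfl
  · rw [SimpleGraph.dist_self] at hdiam; omega
  · exact main dt0 dt5 dt7 (hv 7) (low dt0 dt0_lip _ (by decide))
      (lowc dt5 dt5_lip _ (by decide)) (low dt7 dt7_lip _ (by decide)) (by decide)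
  · exact main dt0 dt7 dt5 (hv 5) (low dt0 dt0_lip _ (by decide))
      (lowc dt7 dt7_lip _ (by decide)) (low dt5 dt5_lip _ (by decide)) (by decide)
  · exact main dt5 dt0 dt7 (hv 7) (low dt5 dt5_lip _ (by decide))
      (lowc dt0 dt0_lip _ (by decide)) (low dt7 dt7_lip _ (by decide)) (by decide)
  · rw [SimpleGraph.dist_self] at hdiam; omega
  · exact main dt5 dt7 dt0 (hv 0) (low dt5 dt5_lip _ (by decide))
      (lowc dt7 dt7_lip _ (by decide)) (low dt0 dt0_lip _ (by decide)) (by decide)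
  · exact main dt7 dt0 dt5 (hv 5) (low dt7 dt7_lip _ (by decide))
      (lowc dt0 dt0_lip _ (by decide)) (low dt5 dt5_lip _ (by decide)) (by decide)
  · exact main dt7 dt5 dt0 (hv 0) (low dt7 dt7_lip _ (by decide))
      (lowc dt5 dt5_lip _ (by decide)) (low dt0 dt0_lip _ (by decide)) (by decide)
  · rw [SimpleGraph.dist_self] at hdiam; omega

/-! ### `G1` is `1`-laminar -/

def et0 : Fin 8 → ℕ := ![0,1,2,3,3,4,3,4]
def et2 : Fin 8 → ℕ := ![2,1,0,1,1,2,1,2]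

lemma et0_lip : ∀ x y : Fin 8, G1.Adj x y → et0 y ≤ et0 x + 1 := by decide

-- walks in G1 to center 2
def g12 : G1.Walk 1 2 := .cons (by decide) .nil
def g02 : G1.Walk 0 2 := .cons (by decide) g12
def g32 : G1.Walk 3 2 := .cons (by decide) .nil
def g42 : G1.Walk 4 2 := .cons (by decide) .nil
def g52 : G1.Walk 5 2 := .cons (by decide) g42
def g62 : G1.Walk 6 2 := .cons (by decide) .nil
def g72 : G1.Walk 7 2 := .cons (by decide) g32

/-- The diametral path `0 - 1 - 2 - 3 - 5` of `G1`. -/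
def p35 : G1.Walk 3 5 := .cons (by decide) .nil
def p25 : G1.Walk 2 5 := .cons (by decide) p35
def p15 : G1.Walk 1 5 := .cons (by decide) p25
def p05 : G1.Walk 0 5 := .cons (by decide) p15

lemma G1_edist_center : ∀ u : Fin 8, G1.edist u 2 ≤ 2 := by
  intro u
  fin_cases u
  · exact le_trans (G1.edist_le g02) (by norm_num [g02, g12])
  · exact le_trans (G1.edist_le g12) (by norm_num [g12])
  · simp [SimpleGraph.edist_self]
  · exact le_trans (G1.edist_le g32) (by norm_num [g32])
  · exact le_trans (G1.edist_le g42) (by norm_num [g42])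
  · exact le_trans (G1.edist_le g52) (by norm_num [g52, g42])
  · exact le_trans (G1.edist_le g62) (by norm_num [g62])
  · exact le_trans (G1.edist_le g72) (by norm_num [g72, g32])

lemma G1_dist05_ge : 4 ≤ G1.dist 0 5 :=
  aux_dist_lower et0 et0_lip (by decide) ⟨p05⟩

lemma G1_dist05 : G1.dist 0 5 = 4 :=
  le_antisymm (le_trans (G1.dist_le p05) (by norm_num [p05, p15, p25, p35])) G1_dist05_ge

lemma G1_ediam : G1.ediam = 4 := by
  refine le_antisymm (ediam_le_of_edist_le fun u v => ?_) ?_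
  · calc G1.edist u v ≤ G1.edist u 2 + G1.edist 2 v := SimpleGraph.edist_triangle
      _ ≤ 2 + 2 := by
          refine add_le_add (G1_edist_center u) ?_
          rw [SimpleGraph.edist_comm]; exact G1_edist_center v
      _ = 4 := by norm_num
  · have h1 : G1.edist 0 5 ≠ ⊤ := edist_ne_top_iff_reachable.mpr ⟨p05⟩
    have h2 : (4 : ℕ∞) ≤ G1.edist 0 5 := by
      rw [← ENat.coe_toNat h1]
      exact_mod_cast G1_dist05_ge
    exact le_trans h2 edist_le_ediam

lemma G1_diam : G1.diam = 4 := by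
  have : G1.diam = ((4 : ℕ∞)).toNat := congrArg ENat.toNat G1_ediam
  simpa using this

lemma G1_klaminar : KLaminar G1 1 := by
  refine ⟨0, 5, p05, ⟨?_, ?_⟩, ?_⟩
  · rw [G1_dist05]; norm_num [p05, p15, p25, p35]
  · rw [G1_dist05, G1_diam]
  · intro x
    have hone : ∀ a b : Fin 8, G1.Adj a b → G1.dist a b ≤ 1 := fun a b h =>
      G1.dist_le (.cons h .nil)
    have hmem : ∀ i : Fin 8, i ∈ p05.support ↔ i ∈ [0,1,2,3,5] := by decide
    fin_cases x
    · exact ⟨0, (hmem 0).mpr (by decide), by simp [SimpleGraph.dist_self]⟩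
    · exact ⟨1, (hmem 1).mpr (by decide), by simp [SimpleGraph.dist_self]⟩
    · exact ⟨2, (hmem 2).mpr (by decide), by simp [SimpleGraph.dist_self]⟩
    · exact ⟨3, (hmem 3).mpr (by decide), by simp [SimpleGraph.dist_self]⟩
    · exact ⟨2, (hmem 2).mpr (by decide), hone 4 2 (by decide)⟩
    · exact ⟨5, (hmem 5).mpr (by decide), by simp [SimpleGraph.dist_self]⟩
    · exact ⟨2, (hmem 2).mpr (by decide), hone 6 2 (by decide)⟩
    · exact ⟨3, (hmem 3).mpr (by decide), hone 7 3 (by decide)⟩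

/-- The induced subgraph `H = G₁ − d` on `{a, b, c, e, f, g, h}` is connected but not
1-laminar.  Consequently `G₁` is 1-laminar but not a diametral path graph, while every
connected diametral path graph is 1-laminar: the class of diametral path graphs is strictly
contained in the class of 1-laminar graphs. -/
theorem diametralPathGraphs_strictly_contained_in_one_laminar :
    (G1.induce {v : Fin 8 | v ≠ 3}).Connected ∧
    ¬ KLaminar (G1.induce {v : Fin 8 | v ≠ 3}) 1 ∧
    KLaminar G1 1 ∧
    ¬ DiametralPathGraph G1 ∧
    (∀ {W : Type} (H : SimpleGraph W), H.Connected → DiametralPathGraph H → KLaminar H 1) := by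
  refine ⟨H_connected, H_not_klaminar, G1_klaminar, ?_, ?_⟩
  · intro h
    exact H_not_klaminar (h {v : Fin 8 | v ≠ 3} H_connected)
  · intro W H hconn hdpg
    have h1 := hdpg Set.univ ((Iso.connected_iff (induceUnivIso H)).mpr hconn)
    exact aux_klaminar_iso (induceUnivIso H) h1
end

section
/- For every 3SAT formula φ on n boolean variables (n even, n ≥ 4), the vertices V₁ and V_{2n} of G(φ) have eccentricity ecc(V₁) = ecc(V_{2n}) = 3n − 1 = diam(G(φ)). -/
open SimpleGraph

/-- Vertices of the graph `G(φ)` associated with a 3SAT formula `φ` with `m` clauses over `n`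
boolean variables (`n` even):
* `lit i b` is the literal vertex `X_{i+1}` (if `b = true`) or `X̄_{i+1}` (if `b = false`);
* `chain k` is the vertex `V_{k+1}` of the two pending chains `V₁ — ⋯ — V_n` and
  `V_{n+1} — ⋯ — V_{2n}`;
* `clause j` is the vertex of the clause `C_{j+1}`;
* `inner j t s` is the `(s+1)`-st internal vertex of the path of length `n/2 + 1` (with `n/2`
  internal vertices) joining the clause vertex `C_{j+1}` to the vertex of its `(t+1)`-st
  literal. -/
inductive Vert (n m : ℕ) : Type
  | lit : Fin n → Bool → Vert n m
  | chain : Fin (2 * n) → Vert n m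
  | clause : Fin m → Vert n m
  | inner : Fin m → Fin 3 → Fin (n / 2) → Vert n m
  deriving DecidableEq

/-- The base (asymmetric) adjacency relation of `G(φ)`, where the 3SAT formula `φ` assigns to
each clause index `j` and each slot `t ∈ {0,1,2}` a literal `φ j t = (i, b)` (variable index
`i`, polarity `b`):
* `X_i` and `X̄_i` are adjacent, and every vertex of `{X_i, X̄_i}` is adjacent to every vertex
  of `{X_{i+1}, X̄_{i+1}}`;
* `V₁ — ⋯ — V_n` and `V_{n+1} — ⋯ — V_{2n}` are paths, `V_n` is moreover adjacent to both
  `X₁, X̄₁` and `V_{n+1}` to both `X_n, X̄_n`;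
* each clause vertex `C_j` is joined to the vertex of each of its literals by a path of length
  `n/2 + 1` whose `n/2` internal vertices are the `inner j t s`. -/
def satRel (n m : ℕ) (φ : Fin m → Fin 3 → Fin n × Bool) : Vert n m → Vert n m → Prop
  | .lit i b, .lit i' b' => (i = i' ∧ b ≠ b') ∨ (i : ℕ) + 1 = (i' : ℕ)
  | .chain k, .chain k' => (k : ℕ) + 1 = (k' : ℕ) ∧ (k' : ℕ) ≠ n
  | .chain k, .lit i _ => ((k : ℕ) = n - 1 ∧ (i : ℕ) = 0) ∨ ((k : ℕ) = n ∧ (i : ℕ) = n - 1)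
  | .clause j, .inner j' _ s => j = j' ∧ (s : ℕ) = 0
  | .inner j t s, .inner j' t' s' => j = j' ∧ t = t' ∧ (s : ℕ) + 1 = (s' : ℕ)
  | .inner j t s, .lit i b => (s : ℕ) = n / 2 - 1 ∧ φ j t = (i, b)
  | _, _ => False

/-- The graph `G(φ)` associated with a 3SAT formula `φ`. -/
def Gphi (n m : ℕ) (φ : Fin m → Fin 3 → Fin n × Bool) : SimpleGraph (Vert n m) :=
  SimpleGraph.fromRel (satRel n m φ)

section GphiProof
variable {n m : ℕ} {φ : Fin m → Fin 3 → Fin n × Bool}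

private lemma exists_walk_of_fun {V : Type*} {G : SimpleGraph V} (f : ℕ → V) (N : ℕ) {u v : V}
    (h : ∀ k, k < N → G.Adj (f k) (f (k + 1))) (h0 : f 0 = u) (hN : f N = v) :
    ∃ p : G.Walk u v, p.length = N := by
  subst h0 hN
  induction N with
  | zero => exact ⟨.nil, rfl⟩
  | succ N ih =>
    obtain ⟨p, hp⟩ := ih fun k hk => h k (by omega)
    exact ⟨p.concat (h N (by omega)), by simp [SimpleGraph.Walk.length_concat, hp]⟩

private lemma gadj {a b : Vert n m} (hne : a ≠ b) (h : satRel n m φ a b) :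
    (Gphi n m φ).Adj a b := by
  rw [Gphi, SimpleGraph.fromRel_adj]
  exact ⟨hne, Or.inl h⟩

private lemma chain_ne {k k' : Fin (2 * n)} (h : (k : ℕ) ≠ (k' : ℕ)) :
    (Vert.chain k : Vert n m) ≠ .chain k' := fun hcc => by
  injection hcc with h1; exact h (by rw [h1])

private lemma lit_ne {i i' : Fin n} {b b' : Bool} (h : (i : ℕ) ≠ (i' : ℕ)) :
    (Vert.lit i b : Vert n m) ≠ .lit i' b' := fun hcc => by
  injection hcc with h1 h2; exact h (by rw [h1])

private lemma lit_ne' {i i' : Fin n} {b b' : Bool} (h : b ≠ b') :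
    (Vert.lit i b : Vert n m) ≠ .lit i' b' := fun hcc => by
  injection hcc with h1 h2; exact h h2

private lemma inner_ne {j j' : Fin m} {t t' : Fin 3} {s s' : Fin (n / 2)}
    (h : (s : ℕ) ≠ (s' : ℕ)) : (Vert.inner j t s : Vert n m) ≠ .inner j' t' s' := fun hcc => by
  injection hcc with h1 h2 h3; exact h (by rw [h3])

private lemma toLitWalk (h4 : 4 ≤ n) (u : Vert n m) :
    ∃ (i : Fin n) (b : Bool) (p : (Gphi n m φ).Walk u (.lit i b)), p.length ≤ n := by
  cases u with
  | lit i b => exact ⟨i, b, .nil, by simp⟩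
  | chain k =>
    have hk2 := k.isLt
    by_cases hk : (k : ℕ) < n
    · refine ⟨⟨0, by omega⟩, true, ?_⟩
      obtain ⟨p, hp⟩ := exists_walk_of_fun (G := Gphi n m φ)
        (u := Vert.chain k) (v := Vert.lit ⟨0, by omega⟩ true)
        (fun r => if r < n - (k:ℕ) then Vert.chain ⟨min ((k:ℕ)+r) (2*n-1), by omega⟩
                  else Vert.lit ⟨0, by omega⟩ true) (n - (k:ℕ))
        (by
          intro r hr
          rcases Nat.lt_or_ge (r+1) (n - (k:ℕ)) with h2 | h2
          · simp only [if_pos hr, if_pos h2]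
            exact gadj (chain_ne (by simp only; omega))
              ⟨by simp only; omega, by simp only; omega⟩
          · simp only [if_pos hr, if_neg (show ¬ (r + 1 < n - (k:ℕ)) by omega)]
            exact gadj (fun h => by simp at h)
              (Or.inl ⟨by simp only; omega, rfl⟩))
        (by
          simp only [if_pos (show 0 < n - (k:ℕ) by omega)]
          exact congrArg _ (Fin.ext (by simp only; omega)))
        (by simp only [if_neg (show ¬ (n - (k:ℕ) < n - (k:ℕ)) by omega)])
      exact ⟨p, by omega⟩
    · refine ⟨⟨n - 1, by omega⟩, true, ?_⟩
      obtain ⟨p, hp⟩ := exists_walk_of_fun (G := Gphi n m φ)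
        (u := Vert.chain k) (v := Vert.lit ⟨n - 1, by omega⟩ true)
        (fun r => if r < (k:ℕ) - n + 1 then Vert.chain ⟨min ((k:ℕ)-r) (2*n-1), by omega⟩
                  else Vert.lit ⟨n - 1, by omega⟩ true) ((k:ℕ) - n + 1)
        (by
          intro r hr
          rcases Nat.lt_or_ge (r+1) ((k:ℕ) - n + 1) with h2 | h2
          · simp only [if_pos hr, if_pos h2]
            exact ((gadj (chain_ne (by simp only; omega))
              ⟨by simp only; omega, by simp only; omega⟩)).symm
          · simp only [if_pos hr, if_neg (show ¬ (r + 1 < (k:ℕ) - n + 1) by omega)]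
            exact gadj (fun h => by simp at h)
              (Or.inr ⟨by simp only; omega, rfl⟩))
        (by
          simp only [if_pos (show 0 < (k:ℕ) - n + 1 by omega)]
          exact congrArg _ (Fin.ext (by simp only; omega)))
        (by simp only [if_neg (show ¬ ((k:ℕ) - n + 1 < (k:ℕ) - n + 1) by omega)])
      exact ⟨p, by omega⟩
  | clause j =>
    refine ⟨(φ j 0).1, (φ j 0).2, ?_⟩
    obtain ⟨p, hp⟩ := exists_walk_of_fun (G := Gphi n m φ)
      (u := Vert.clause j) (v := Vert.lit (φ j 0).1 (φ j 0).2)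
      (fun r => if r = 0 then Vert.clause j
                else if r ≤ n/2 then Vert.inner j 0 ⟨min (r-1) (n/2-1), by omega⟩
                else Vert.lit (φ j 0).1 (φ j 0).2) (n/2 + 1)
      (by
        intro r hr
        rcases Nat.eq_zero_or_pos r with h0 | h0
        · subst h0
          simp only [if_pos rfl, if_neg (Nat.one_ne_zero), if_pos (show 1 ≤ n/2 by omega)]
          exact gadj (fun h => by simp at h) ⟨rfl, by simp⟩
        · rcases Nat.lt_or_ge (r+1) (n/2 + 1) with h2 | h2
          · simp only [if_neg (show ¬ r = 0 by omega), if_pos (show r ≤ n/2 by omega),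
              if_neg (show ¬ r + 1 = 0 by omega), if_pos (show r + 1 ≤ n/2 by omega)]
            exact gadj (inner_ne (by simp only; omega)) ⟨rfl, rfl, by simp only; omega⟩
          · simp only [if_neg (show ¬ r = 0 by omega), if_pos (show r ≤ n/2 by omega),
              if_neg (show ¬ r + 1 = 0 by omega), if_neg (show ¬ r + 1 ≤ n/2 by omega)]
            exact gadj (fun h => by simp at h) ⟨by simp only; omega, rfl⟩)
      (by simp)
      (by rw [if_neg (show ¬ n/2 + 1 = 0 by omega), if_neg (show ¬ n/2 + 1 ≤ n/2 by omega)])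
    exact ⟨p, by omega⟩
  | inner j t s =>
    have hs := s.isLt
    refine ⟨(φ j t).1, (φ j t).2, ?_⟩
    obtain ⟨p, hp⟩ := exists_walk_of_fun (G := Gphi n m φ)
      (u := Vert.inner j t s) (v := Vert.lit (φ j t).1 (φ j t).2)
      (fun r => if r < n/2 - (s:ℕ) then Vert.inner j t ⟨min ((s:ℕ)+r) (n/2-1), by omega⟩
                else Vert.lit (φ j t).1 (φ j t).2) (n/2 - (s:ℕ))
      (by
        intro r hr
        rcases Nat.lt_or_ge (r+1) (n/2 - (s:ℕ)) with h2 | h2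
        · simp only [if_pos hr, if_pos h2]
          exact gadj (inner_ne (by simp only; omega)) ⟨rfl, rfl, by simp only; omega⟩
        · simp only [if_pos hr, if_neg (show ¬ (r + 1 < n/2 - (s:ℕ)) by omega)]
          exact gadj (fun h => by simp at h) ⟨by simp only; omega, rfl⟩)
      (by
        simp only [if_pos (show 0 < n/2 - (s:ℕ) by omega)]
        exact congrArg (Vert.inner j t) ((Fin.ext (show min ((s:ℕ)+0) (n/2-1) = (s:ℕ) by omega))))
      (by simp)
    exact ⟨p, by omega⟩

private lemma litLitWalk (h4 : 4 ≤ n) (i i' : Fin n) (b b' : Bool) :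
    ∃ p : (Gphi n m φ).Walk (.lit i b) (.lit i' b'), p.length ≤ n - 1 := by
  have hi := i.isLt
  have hi' := i'.isLt
  rcases Nat.lt_trichotomy (i : ℕ) (i' : ℕ) with hlt | heq | hgt
  · obtain ⟨p, hp⟩ := exists_walk_of_fun (G := Gphi n m φ)
      (u := Vert.lit i b) (v := Vert.lit i' b')
      (fun r => if r = 0 then Vert.lit i b
                else Vert.lit ⟨min ((i:ℕ)+r) (n-1), by omega⟩ b') ((i':ℕ) - (i:ℕ))
      (by
        intro r hr
        rcases Nat.eq_zero_or_pos r with h0 | h0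
        · subst h0
          simp only [if_pos rfl, if_neg (Nat.one_ne_zero)]
          exact gadj (lit_ne (by simp only; omega)) (Or.inr (by simp only; omega))
        · simp only [if_neg (show ¬ r = 0 by omega), if_neg (show ¬ r + 1 = 0 by omega)]
          exact gadj (lit_ne (by simp only; omega)) (Or.inr (by simp only; omega)))
      (by simp)
      (by
        rw [if_neg (show ¬ (i':ℕ) - (i:ℕ) = 0 by omega)]
        exact congrArg (fun x => Vert.lit x b') (Fin.ext (by simp only; omega)))
    exact ⟨p, by omega⟩
  · have : i = i' := Fin.ext heq
    subst this
    by_cases hb : b = b'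
    · subst hb; exact ⟨.nil, by simp⟩
    · exact ⟨.cons (gadj (lit_ne' hb) (Or.inl ⟨rfl, hb⟩)) .nil, by simp; omega⟩
  · obtain ⟨p, hp⟩ := exists_walk_of_fun (G := Gphi n m φ)
      (u := Vert.lit i b) (v := Vert.lit i' b')
      (fun r => if r = 0 then Vert.lit i b
                else Vert.lit ⟨min ((i:ℕ)-r) (n-1), by omega⟩ b') ((i:ℕ) - (i':ℕ))
      (by
        intro r hr
        rcases Nat.eq_zero_or_pos r with h0 | h0
        · subst h0
          simp only [if_pos rfl, if_neg (Nat.one_ne_zero)]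
          exact (gadj (lit_ne (by simp only; omega)) (Or.inr (by simp only; omega))).symm
        · simp only [if_neg (show ¬ r = 0 by omega), if_neg (show ¬ r + 1 = 0 by omega)]
          exact (gadj (lit_ne (by simp only; omega)) (Or.inr (by simp only; omega))).symm)
      (by simp)
      (by
        rw [if_neg (show ¬ (i:ℕ) - (i':ℕ) = 0 by omega)]
        exact congrArg (fun x => Vert.lit x b') (Fin.ext (by simp only; omega)))
    exact ⟨p, by omega⟩

private lemma walkBetween (h4 : 4 ≤ n) (u v : Vert n m) :
    ∃ p : (Gphi n m φ).Walk u v, p.length ≤ 3 * n - 1 := by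
  obtain ⟨i, b, p, hp⟩ := toLitWalk (φ := φ) h4 u
  obtain ⟨i', b', q, hq⟩ := toLitWalk (φ := φ) h4 v
  obtain ⟨r, hr⟩ := litLitWalk (φ := φ) h4 i i' b b'
  refine ⟨(p.append r).append q.reverse, ?_⟩
  simp only [SimpleGraph.Walk.length_append, SimpleGraph.Walk.length_reverse]
  omega

private def cmin (φ : Fin m → Fin 3 → Fin n × Bool) (j : Fin m) : ℕ :=
  min ((φ j 0).1 : ℕ) (min ((φ j 1).1 : ℕ) ((φ j 2).1 : ℕ))

private def gpot (n : ℕ) {m : ℕ} (φ : Fin m → Fin 3 → Fin n × Bool) : Vert n m → ℕ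
  | .lit i _ => n + i
  | .chain k => if (k : ℕ) < n then k else n + k
  | .clause j => n + n / 2 + 1 + cmin φ j
  | .inner j t s => min (n + (φ j t).1 + n / 2 - s) (n + n / 2 + 2 + cmin φ j + s)

private lemma cmin_le (φ : Fin m → Fin 3 → Fin n × Bool) (j : Fin m) (t : Fin 3) :
    cmin φ j ≤ ((φ j t).1 : ℕ) := by
  fin_cases t <;> simp [cmin] <;> omega

private lemma gpot_rel (h4 : 4 ≤ n)
    {a b : Vert n m} (hab : satRel n m φ a b) :
    gpot n φ a ≤ gpot n φ b + 1 ∧ gpot n φ b ≤ gpot n φ a + 1 := by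
  have hn2 : 2 ≤ n / 2 := by omega
  cases a with
  | lit i bb => cases b with
    | lit i' bb' =>
      simp only [satRel] at hab
      have := i.isLt; have := i'.isLt
      rcases hab with ⟨h1, _⟩ | h1 <;> simp [gpot] <;> omega
    | chain k => exact hab.elim
    | clause j => exact hab.elim
    | inner j t s => exact hab.elim
  | chain k => cases b with
    | lit i bb =>
      simp only [satRel] at hab
      have := k.isLt; have := i.isLt
      simp only [gpot]; split_ifs <;> omega
    | chain k' =>
      simp only [satRel] at hab
      have := k.isLt; have := k'.isLt
      simp only [gpot]; split_ifs <;> omega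
    | clause j => exact hab.elim
    | inner j t s => exact hab.elim
  | clause j => cases b with
    | lit i bb => exact hab.elim
    | chain k => exact hab.elim
    | clause j' => exact hab.elim
    | inner j' t s =>
      simp only [satRel] at hab
      obtain ⟨rfl, hs⟩ := hab
      have := cmin_le φ j t
      have := ((φ j t).1).isLt
      simp only [gpot]
      omega
  | inner j t s => cases b with
    | lit i bb =>
      simp only [satRel] at hab
      obtain ⟨hs, hφ⟩ := hab
      have := cmin_le φ j t
      have := ((φ j t).1).isLt
      have := s.isLt
      have hi : ((φ j t).1 : ℕ) = i := by rw [hφ]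
      have := i.isLt
      simp only [gpot]
      omega
    | chain k => exact hab.elim
    | clause j' => exact hab.elim
    | inner j' t' s' =>
      simp only [satRel] at hab
      obtain ⟨rfl, rfl, hs⟩ := hab
      have := s.isLt; have := s'.isLt
      have := cmin_le φ j t
      have := ((φ j t).1).isLt
      simp only [gpot]
      omega

private lemma gpot_walk (h4 : 4 ≤ n) {u v : Vert n m} (p : (Gphi n m φ).Walk u v) :
    gpot n φ v ≤ gpot n φ u + p.length := by
  induction p with
  | nil => simp
  | @cons a c d h p ih =>
    have h' := h
    rw [Gphi, SimpleGraph.fromRel_adj] at h'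
    have hstep : gpot n φ c ≤ gpot n φ a + 1 := by
      rcases h'.2 with hh | hh
      · exact (gpot_rel h4 hh).2
      · exact (gpot_rel h4 hh).1
    simp only [SimpleGraph.Walk.length_cons]
    omega

end GphiProof

/-- The eccentricity of a vertex: the largest distance from `x` to any vertex. -/
noncomputable def ecc {V : Type*} (G : SimpleGraph V) (x : V) : ℕ :=
  sSup (Set.range (G.dist x))

/-- For every 3SAT formula `φ` on `n` boolean variables (`n` even, `n ≥ 4`), the vertices `V₁`
and `V_{2n}` of `G(φ)` have eccentricity `ecc(V₁) = ecc(V_{2n}) = 3n − 1 = diam G(φ)`. -/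
theorem Gphi_ecc_endpoints (n m : ℕ) (hn : Even n) (h4 : 4 ≤ n)
    (φ : Fin m → Fin 3 → Fin n × Bool) :
    ecc (Gphi n m φ) (Vert.chain ⟨0, by omega⟩) = 3 * n - 1 ∧
    ecc (Gphi n m φ) (Vert.chain ⟨2 * n - 1, by omega⟩) = 3 * n - 1 ∧
    (Gphi n m φ).diam = 3 * n - 1 := by
  set G := Gphi n m φ with hG
  set v0 : Vert n m := Vert.chain ⟨0, by omega⟩ with hv0
  set v1 : Vert n m := Vert.chain ⟨2 * n - 1, by omega⟩ with hv1
  have distle : ∀ u v : Vert n m, G.dist u v ≤ 3 * n - 1 := by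
    intro u v
    obtain ⟨p, hp⟩ := walkBetween (φ := φ) h4 u v
    exact (SimpleGraph.dist_le p).trans hp
  have hLip : ∀ {u v : Vert n m} (p : G.Walk u v), gpot n φ v ≤ gpot n φ u + p.length :=
    fun p => gpot_walk h4 p
  have hg0 : gpot n φ v0 = 0 := by
    rw [hv0]; simp only [gpot]; rw [if_pos]
    exact (show (0:ℕ) < n by omega)
  have hg1 : gpot n φ v1 = 3 * n - 1 := by
    rw [hv1]; simp only [gpot]; rw [if_neg]
    · show n + (2 * n - 1) = 3 * n - 1; omega
    · show ¬ ((2 * n - 1 : ℕ) < n); omega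
  have hreach : G.Reachable v0 v1 := by
    obtain ⟨p, _⟩ := walkBetween (φ := φ) h4 v0 v1
    exact ⟨p⟩
  have hdistge : 3 * n - 1 ≤ G.dist v0 v1 := by
    obtain ⟨p, hp⟩ := hreach.exists_walk_length_eq_dist
    have := hLip p
    omega
  have hdist : G.dist v0 v1 = 3 * n - 1 := le_antisymm (distle _ _) hdistge
  have hbdd : (3 * n - 1 : ℕ) ∈ upperBounds (Set.range (G.dist v0)) := by
    rintro x ⟨v, rfl⟩; exact distle _ _
  have hbdd' : (3 * n - 1 : ℕ) ∈ upperBounds (Set.range (G.dist v1)) := by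
    rintro x ⟨v, rfl⟩; exact distle _ _
  refine ⟨?_, ?_, ?_⟩
  · refine le_antisymm (csSup_le ⟨G.dist v0 v0, v0, rfl⟩ hbdd) ?_
    calc (3 * n - 1 : ℕ) = G.dist v0 v1 := hdist.symm
      _ ≤ sSup (Set.range (G.dist v0)) := le_csSup ⟨3 * n - 1, hbdd⟩ ⟨v1, rfl⟩
  · refine le_antisymm (csSup_le ⟨G.dist v1 v1, v1, rfl⟩ hbdd') ?_
    calc (3 * n - 1 : ℕ) = G.dist v1 v0 := by rw [SimpleGraph.dist_comm]; exact hdist.symm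
      _ ≤ sSup (Set.range (G.dist v1)) := le_csSup ⟨3 * n - 1, hbdd'⟩ ⟨v0, rfl⟩
  · have hediam : G.ediam = ((3 * n - 1 : ℕ) : ℕ∞) := by
      refine le_antisymm (SimpleGraph.ediam_le_of_edist_le fun u v => ?_) ?_
      · obtain ⟨p, hp⟩ := walkBetween (φ := φ) h4 u v
        exact (SimpleGraph.edist_le p).trans (by exact_mod_cast hp)
      · refine le_trans ?_ (SimpleGraph.edist_le_ediam (u := v0) (v := v1))
        obtain ⟨p, hp⟩ := hreach.exists_walk_length_eq_edist
        rw [← hp]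
        have := hLip p
        exact_mod_cast (by omega : 3 * n - 1 ≤ p.length)
    rw [SimpleGraph.diam, hediam, ENat.toNat_coe]
end
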